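/- Assume A is as above (quantum cohomology of the cubic threefold, generated by b = e₁ over ℂ[q]). Then the ℂ[q]-algebra homomorphism ℂ[b,q] → A sending b to e₁ is surjective with kernel the ideal (b⁴ − 27qb²), i.e. A ≅ ℂ[b,q]/(b⁴ − 27qb²). -/

import Mathlib

open Polynomial

/-- let `A` be a commutative `ℂ[q]`-algebra which is free with basis
`e₀ = 1, e₁ = b, e₂, e₃` and quantum products `b·b = e₂ + 6q`, `b·e₂ = e₃ + 15q b`,
`b·e₃ = 6q e₂ + 36q²` (the small quantum cohomology of the cubic threefold `M³₅`).
Then the `ℂ[q]`-algebra homomorphism `ℂ[b,q] → A`, `b ↦ e₁`, is surjective with kernel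
the ideal `(b⁴ − 27 q b²)`, i.e. `A ≅ ℂ[b,q]/(b⁴ − 27qb²)`. -/
theorem stmt10 (A : Type*) [CommRing A] [Algebra (Polynomial ℂ) A]
    (e : Module.Basis (Fin 4) (Polynomial ℂ) A)
    (he0 : e 0 = 1) (b : A) (he1 : e 1 = b)
    (h11 : b * b = e 2 + ((6 * X : Polynomial ℂ)) • e 0)
    (h12 : b * e 2 = e 3 + ((15 * X : Polynomial ℂ)) • e 1)
    (h13 : b * e 3 = ((6 * X : Polynomial ℂ)) • e 2 + ((36 * X ^ 2 : Polynomial ℂ)) • e 0) :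
    Function.Surjective
      (Polynomial.aeval b : Polynomial (Polynomial ℂ) →ₐ[Polynomial ℂ] A) ∧
    RingHom.ker
        (Polynomial.aeval b : Polynomial (Polynomial ℂ) →ₐ[Polynomial ℂ] A)
      = Ideal.span {(X : Polynomial (Polynomial ℂ)) ^ 4 - C (27 * X) * X ^ 2} := by
  have hb2 : b ^ 2 = e 2 + (6 * X : Polynomial ℂ) • e 0 := by rw [sq]; exact h11
  have hb3 : b ^ 3 = e 3 + (21 * X : Polynomial ℂ) • e 1 := by
    have h : b ^ 3 = b * (b * b) := by ring
    rw [h, h11, mul_add, mul_smul_comm, he0, mul_one, h12, he1]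
    module
  have hb4 : b ^ 4 = (27 * X : Polynomial ℂ) • e 2 + (162 * X ^ 2 : Polynomial ℂ) • e 0 := by
    have h : b ^ 4 = b * b ^ 3 := by ring
    rw [h, hb3, mul_add, mul_smul_comm, h13, he1, ← sq, hb2]
    module
  set f : Polynomial (Polynomial ℂ) := X ^ 4 - C (27 * X) * X ^ 2 with hf
  have hfb : (aeval b) f = 0 := by
    rw [hf, map_sub, map_mul, map_pow, map_pow, aeval_X, aeval_C, hb4, hb2,
      ← Algebra.smul_def, smul_add, smul_smul]
    module
  have hdeg3 : (C (27 * X) * X ^ 2 : Polynomial (Polynomial ℂ)).degree < (4 : ℕ) := by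
    have h3 : (C (27 * X) * X ^ 2 : Polynomial (Polynomial ℂ)).degree ≤ 3 := by
      compute_degree
      norm_num
    exact lt_of_le_of_lt h3 (by norm_num)
  have hmonic : f.Monic := monic_X_pow_sub hdeg3
  have hfdeg : f.degree = 4 := by
    rw [hf, sub_eq_add_neg,
      degree_add_eq_left_of_degree_lt (by rw [degree_neg, degree_X_pow]; exact hdeg3)]
    exact degree_X_pow 4
  have hm0 : e 0 ∈ (aeval b : Polynomial (Polynomial ℂ) →ₐ[Polynomial ℂ] A).range :=
    (AlgHom.mem_range _).mpr ⟨1, by simp [he0]⟩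
  have hm1 : e 1 ∈ (aeval b : Polynomial (Polynomial ℂ) →ₐ[Polynomial ℂ] A).range :=
    (AlgHom.mem_range _).mpr ⟨X, by simp [he1]⟩
  have hm2 : e 2 ∈ (aeval b : Polynomial (Polynomial ℂ) →ₐ[Polynomial ℂ] A).range := by
    refine (AlgHom.mem_range _).mpr ⟨X ^ 2 - C (6 * X), ?_⟩
    rw [map_sub, map_pow, aeval_X, aeval_C, hb2, he0, Algebra.smul_def, mul_one]
    ring
  have hm3 : e 3 ∈ (aeval b : Polynomial (Polynomial ℂ) →ₐ[Polynomial ℂ] A).range := by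
    refine (AlgHom.mem_range _).mpr ⟨X ^ 3 - C (21 * X) * X, ?_⟩
    rw [map_sub, map_mul, map_pow, aeval_X, aeval_C, hb3, he1, Algebra.smul_def]
    ring
  have hmem : ∀ i : Fin 4, e i ∈ (aeval b : Polynomial (Polynomial ℂ) →ₐ[Polynomial ℂ] A).range := by
    intro i
    fin_cases i
    exacts [hm0, hm1, hm2, hm3]
  have hrange : ∀ a : A, a ∈ (aeval b : Polynomial (Polynomial ℂ) →ₐ[Polynomial ℂ] A).range := by
    intro a
    rw [← e.sum_repr a]
    exact Subalgebra.sum_mem _ fun i _ => Subalgebra.smul_mem _ (hmem i) _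
  constructor
  · intro a
    exact hrange a
  · apply le_antisymm
    · intro p hp
      have hpb : (aeval b) p = 0 := hp
      set r := p %ₘ f with hr
      have hrdeg : r.degree < f.degree := degree_modByMonic_lt p hmonic
      have hnd : r.natDegree < 4 := by
        by_cases hr0 : r = 0
        · simp [hr0]
        · have h4 := hrdeg
          rw [hfdeg] at h4
          exact (natDegree_lt_iff_degree_lt hr0).mpr (by exact_mod_cast h4)
      have hrb : (aeval b) r = 0 := by
        have heq := modByMonic_add_div p f
        have h2 : (aeval b) (p %ₘ f + f * (p /ₘ f)) = 0 := by rw [heq]; exact hpb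
        rw [map_add, map_mul, hfb, zero_mul, add_zero] at h2
        exact h2
      have hsum : ∑ i ∈ Finset.range 4, r.coeff i • b ^ i = 0 := by
        rw [← aeval_eq_sum_range' hnd]; exact hrb
      have hexp : (r.coeff 0 + 6 * X * r.coeff 2) • e 0 + (r.coeff 1 + 21 * X * r.coeff 3) • e 1
          + r.coeff 2 • e 2 + r.coeff 3 • e 3 = 0 := by
        rw [← hsum]
        simp only [Finset.sum_range_succ, Finset.sum_range_zero, zero_add, pow_zero, pow_one,
          hb2, hb3, smul_add, smul_smul]
        rw [he0, he1]
        module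
      have hli := Fintype.linearIndependent_iff.mp e.linearIndependent
        ![r.coeff 0 + 6 * X * r.coeff 2, r.coeff 1 + 21 * X * r.coeff 3, r.coeff 2, r.coeff 3]
        (by rw [Fin.sum_univ_four]; simpa using hexp)
      have hc2 : r.coeff 2 = 0 := by simpa using hli 2
      have hc3 : r.coeff 3 = 0 := by simpa using hli 3
      have hc0 : r.coeff 0 = 0 := by have h0 := hli 0; simp [hc2] at h0; simpa using h0
      have hc1 : r.coeff 1 = 0 := by have h1 := hli 1; simp [hc3] at h1; simpa using h1
      have hr0 : r = 0 := by
        refine Polynomial.ext fun n => ?_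
        rw [coeff_zero]
        rcases Nat.lt_or_ge n 4 with h | h
        · interval_cases n <;> simp [hc0, hc1, hc2, hc3]
        · exact coeff_eq_zero_of_degree_lt
            (lt_of_lt_of_le (hrdeg.trans_le hfdeg.le) (by exact_mod_cast h))
      have hpf : p = f * (p /ₘ f) := by
        conv_lhs => rw [← modByMonic_add_div p f]
        rw [← hr, hr0, zero_add]
      rw [hpf]
      exact Ideal.mul_mem_right _ _ (Ideal.subset_span rfl)
    · rw [Ideal.span_le, Set.singleton_subset_iff]
      exact hfb
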